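/- For every integer n ≥ 1 there exist constants γ̄(n) > 1 and C(n) > 1, depending only on n, with the following property. Let 0 < θ < 1, γ₁ > 1, γ₃ > 1 and 0 < γ₂ ≤ 1, and let A, D be invertible n×n real matrices and B, C arbitrary n×n real matrices satisfying ‖A⁻¹‖ ≤ 1/(θγ₁), ‖B‖ + ‖C‖ ≤ 1/(θγ₂) and ‖D⁻¹‖ ≤ 1/(θγ₃), where ‖·‖ is the operator norm. If γ₁γ₂² ≥ γ̄(n)/θ⁴, then the 2n×2n block matrix M with blocks (A B; C D) is invertible, and the four n×n blocks E₁₁, E₁₂, E₂₁, E₂₂ of the block matrix M⁻¹ − (A⁻¹ 0; 0 D⁻¹) satisfy ‖E₁₁‖ ≤ C(n)/(θ⁵γ₁²γ₂²), ‖E₁₂‖ ≤ C(n)/(θ³γ₁γ₂), ‖E₂₁‖ ≤ C(n)/(θ³γ₁γ₂), and ‖E₂₂‖ ≤ C(n)/(θ⁵γ₁γ₂²γ₃²). -/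

import Mathlib

open Matrix

/-- The operator norm of a square real matrix, induced by the Euclidean norm on `ℝⁿ`. -/
noncomputable def matOpNorm {m : Type*} [Fintype m] [DecidableEq m]
    (M : Matrix m m ℝ) : ℝ :=
  ‖(Matrix.toEuclideanCLM (𝕜 := ℝ) M : EuclideanSpace ℝ m →L[ℝ] EuclideanSpace ℝ m)‖

section helpers
variable {m : Type*} [Fintype m] [DecidableEq m]

lemma matOpNorm_nonneg (M : Matrix m m ℝ) : 0 ≤ matOpNorm M := norm_nonneg _

lemma matOpNorm_mul_le (M N : Matrix m m ℝ) :
    matOpNorm (M * N) ≤ matOpNorm M * matOpNorm N := by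
  unfold matOpNorm; rw [_root_.map_mul]; exact norm_mul_le _ _

lemma matOpNorm_neg (M : Matrix m m ℝ) : matOpNorm (-M) = matOpNorm M := by
  unfold matOpNorm; rw [map_neg, norm_neg]

lemma toCLM_inv (X : Matrix m m ℝ) (h : IsUnit X) :
    Matrix.toEuclideanCLM (𝕜 := ℝ) X⁻¹ = Ring.inverse (Matrix.toEuclideanCLM (𝕜 := ℝ) X) := by
  obtain ⟨v, hv⟩ := h.map (Matrix.toEuclideanCLM (𝕜 := ℝ))
  rw [← hv, Ring.inverse_unit]
  refine (Units.inv_eq_of_mul_eq_one_right ?_).symm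
  rw [hv, ← _root_.map_mul, Matrix.mul_nonsing_inv _ ((Matrix.isUnit_iff_isUnit_det X).mp h),
    _root_.map_one]

lemma matrix_one_sub {T : Matrix m m ℝ} (h : matOpNorm T < 1) :
    IsUnit (1 - T) ∧ matOpNorm (1 - T)⁻¹ ≤ (1 - matOpNorm T)⁻¹ := by
  set φ := Matrix.toEuclideanCLM (𝕜 := ℝ) (n := m)
  have hφ : ‖φ T‖ < 1 := h
  have hu : IsUnit (φ (1 - T)) := by
    rw [map_sub, _root_.map_one]
    exact isUnit_one_sub_of_norm_lt_one hφ
  have h1 : IsUnit (1 - T) := by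
    have := hu.map φ.symm
    simpa using this
  refine ⟨h1, ?_⟩
  have heq : matOpNorm (1 - T)⁻¹ = ‖Ring.inverse (1 - φ T)‖ := by
    show ‖φ _‖ = _
    rw [toCLM_inv _ h1, map_sub, _root_.map_one]
  rw [heq, ← geom_series_eq_inverse _ hφ]
  have hb := tsum_geometric_le_of_norm_lt_one (φ T) hφ
  have h1le : ‖(1 : EuclideanSpace ℝ m →L[ℝ] EuclideanSpace ℝ m)‖ ≤ 1 :=
    ContinuousLinearMap.norm_id_le
  have hTφ : matOpNorm T = ‖φ T‖ := rfl
  rw [hTφ]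
  linarith

lemma toBlocks₁₁_sub {l o : Type*} (X Y : Matrix (l ⊕ o) (l ⊕ o) ℝ) :
    (X - Y).toBlocks₁₁ = X.toBlocks₁₁ - Y.toBlocks₁₁ := rfl

lemma toBlocks₁₂_sub {l o : Type*} (X Y : Matrix (l ⊕ o) (l ⊕ o) ℝ) :
    (X - Y).toBlocks₁₂ = X.toBlocks₁₂ - Y.toBlocks₁₂ := rfl

lemma toBlocks₂₁_sub {l o : Type*} (X Y : Matrix (l ⊕ o) (l ⊕ o) ℝ) :
    (X - Y).toBlocks₂₁ = X.toBlocks₂₁ - Y.toBlocks₂₁ := rfl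

lemma toBlocks₂₂_sub {l o : Type*} (X Y : Matrix (l ⊕ o) (l ⊕ o) ℝ) :
    (X - Y).toBlocks₂₂ = X.toBlocks₂₂ - Y.toBlocks₂₂ := rfl

lemma mul_le_mul_aux {x y X Y : ℝ} (hx : 0 ≤ x) (hxX : x ≤ X) (hy : 0 ≤ y) (hyY : y ≤ Y) :
    x * y ≤ X * Y := mul_le_mul hxX hyY hy (hx.trans hxX)

end helpers

section arith

variable {θ γ₁ γ₂ γ₃ a b c d s : ℝ}

lemma arith_T (hθ : 0 < θ) (hγ₁ : 1 < γ₁) (hγ₂ : 0 < γ₂) (hγ₃ : 1 < γ₃)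
    (ha0 : 0 ≤ a) (hb0 : 0 ≤ b) (hc0 : 0 ≤ c) (hd0 : 0 ≤ d)
    (ha : a ≤ 1/(θ*γ₁)) (hbc : b + c ≤ 1/(θ*γ₂)) (hd : d ≤ 1/(θ*γ₃))
    (hγ : 2/θ^4 ≤ γ₁*γ₂^2) :
    d * ((c*a)*b) ≤ 1/8 := by
  have hγ₁0 : (0:ℝ) < γ₁ := by linarith
  have hγ₃0 : (0:ℝ) < γ₃ := by linarith
  have h1 : a * (θ*γ₁) ≤ 1 := (le_div_iff₀ (by positivity)).mp ha
  have h3 : d * (θ*γ₃) ≤ 1 := (le_div_iff₀ (by positivity)).mp hd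
  have hbc' : (b+c) * (θ*γ₂) ≤ 1 := (le_div_iff₀ (by positivity)).mp hbc
  have h2 : (b*c) * (θ^2*γ₂^2) ≤ 1/4 := by
    nlinarith [sq_nonneg ((b-c)*(θ*γ₂)), mul_nonneg (add_nonneg hb0 hc0) (by positivity : (0:ℝ) ≤ θ*γ₂), hbc']
  have hQ2 : 2 ≤ θ^4*(γ₁*γ₂^2)*γ₃ := by
    rw [div_le_iff₀ (by positivity)] at hγ
    nlinarith [mul_pos (mul_pos (pow_pos hθ 4) hγ₁0) (by positivity : (0:ℝ) < γ₂^2)]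
  have key : (d*((c*a)*b)) * (θ^4*(γ₁*γ₂^2)*γ₃)
      = (a*(θ*γ₁))*(((b*c)*(θ^2*γ₂^2))*(d*(θ*γ₃))) := by ring
  have hbnd : (d*((c*a)*b)) * (θ^4*(γ₁*γ₂^2)*γ₃) ≤ 1/4 := by
    rw [key]
    calc (a*(θ*γ₁))*(((b*c)*(θ^2*γ₂^2))*(d*(θ*γ₃)))
        ≤ 1*((1/4)*1) := by
          refine mul_le_mul_aux (by positivity) h1 ?_ (mul_le_mul_aux (by positivity) h2 (by positivity) h3)
          positivity
      _ = 1/4 := by norm_num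
  have hx0 : 0 ≤ d*((c*a)*b) := by positivity
  nlinarith [mul_nonneg hx0 (by linarith : (0:ℝ) ≤ θ^4*(γ₁*γ₂^2)*γ₃ - 2)]

lemma arith_main (hθ : 0 < θ) (hγ₁ : 1 < γ₁) (hγ₂ : 0 < γ₂) (hγ₃ : 1 < γ₃)
    (ha0 : 0 ≤ a) (hb0 : 0 ≤ b) (hc0 : 0 ≤ c) (hd0 : 0 ≤ d) (hs0 : 0 ≤ s)
    (ha : a ≤ 1/(θ*γ₁)) (hbc : b + c ≤ 1/(θ*γ₂)) (hd : d ≤ 1/(θ*γ₃))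
    (hs : s ≤ 2*d) :
    a * (b * (s * (c*a))) ≤ 2/(θ^5*γ₁^2*γ₂^2) ∧
    a * (b * s) ≤ 2/(θ^3*γ₁*γ₂) ∧
    s * (c*a) ≤ 2/(θ^3*γ₁*γ₂) ∧
    s * (((c*a)*b)*d) ≤ 2/(θ^5*γ₁*γ₂^2*γ₃^2) := by
  have hγ₁0 : (0:ℝ) < γ₁ := by linarith
  have hγ₂0 : (0:ℝ) < γ₂ := hγ₂
  have hγ₃0 : (0:ℝ) < γ₃ := by linarith
  have h1 : a * (θ*γ₁) ≤ 1 := (le_div_iff₀ (by positivity)).mp ha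
  have h3 : d * (θ*γ₃) ≤ 1 := (le_div_iff₀ (by positivity)).mp hd
  have hbc' : (b+c) * (θ*γ₂) ≤ 1 := (le_div_iff₀ (by positivity)).mp hbc
  have hb1 : b * (θ*γ₂) ≤ 1 := by nlinarith [mul_nonneg hc0 (by positivity : (0:ℝ) ≤ θ*γ₂)]
  have hc1 : c * (θ*γ₂) ≤ 1 := by nlinarith [mul_nonneg hb0 (by positivity : (0:ℝ) ≤ θ*γ₂)]
  have h2 : (b*c) * (θ^2*γ₂^2) ≤ 1/4 := by
    nlinarith [sq_nonneg ((b-c)*(θ*γ₂)), mul_nonneg (add_nonneg hb0 hc0) (by positivity : (0:ℝ) ≤ θ*γ₂), hbc']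
  have h4 : s * (θ*γ₃) ≤ 2 := by
    have := mul_le_mul_of_nonneg_right hs (by positivity : (0:ℝ) ≤ θ*γ₃)
    nlinarith
  have h4' : s * θ ≤ 2 := by
    nlinarith [mul_nonneg (mul_nonneg hs0 hθ.le) (by linarith : (0:ℝ) ≤ γ₃ - 1)]
  refine ⟨?_, ?_, ?_, ?_⟩
  · rw [le_div_iff₀ (by positivity)]
    calc a * (b * (s * (c*a))) * (θ^5*γ₁^2*γ₂^2)
        = (a*(θ*γ₁)) * ((a*(θ*γ₁)) * (((b*c)*(θ^2*γ₂^2)) * (s*θ))) := by ring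
      _ ≤ 1 * (1 * ((1/4) * 2)) := by
          refine mul_le_mul_aux (by positivity) h1 ?_
            (mul_le_mul_aux (by positivity) h1 ?_
              (mul_le_mul_aux (by positivity) h2 (by positivity) h4'))
          · positivity
          · positivity
      _ ≤ 2 := by norm_num
  · rw [le_div_iff₀ (by positivity)]
    calc a * (b * s) * (θ^3*γ₁*γ₂)
        = (a*(θ*γ₁)) * ((b*(θ*γ₂)) * (s*θ)) := by ring
      _ ≤ 1 * (1 * 2) := by
          refine mul_le_mul_aux (by positivity) h1 ?_
            (mul_le_mul_aux (by positivity) hb1 (by positivity) h4')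
          positivity
      _ ≤ 2 := by norm_num
  · rw [le_div_iff₀ (by positivity)]
    calc s * (c*a) * (θ^3*γ₁*γ₂)
        = (a*(θ*γ₁)) * ((c*(θ*γ₂)) * (s*θ)) := by ring
      _ ≤ 1 * (1 * 2) := by
          refine mul_le_mul_aux (by positivity) h1 ?_
            (mul_le_mul_aux (by positivity) hc1 (by positivity) h4')
          positivity
      _ ≤ 2 := by norm_num
  · rw [le_div_iff₀ (by positivity)]
    calc s * (((c*a)*b)*d) * (θ^5*γ₁*γ₂^2*γ₃^2)
        = (a*(θ*γ₁)) * (((b*c)*(θ^2*γ₂^2)) * ((d*(θ*γ₃)) * (s*(θ*γ₃)))) := by ring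
      _ ≤ 1 * ((1/4) * (1 * 2)) := by
          refine mul_le_mul_aux (by positivity) h1 ?_
            (mul_le_mul_aux (by positivity) h2 ?_
              (mul_le_mul_aux (by positivity) h3 (by positivity) h4))
          · positivity
          · positivity
      _ ≤ 2 := by norm_num

end arith

/-- Block matrix inversion estimate: for every `n ≥ 1` there are
constants `γ̄(n) > 1` and `C(n) > 1` such that whenever `0 < θ < 1`, `γ₁, γ₃ > 1`,
`0 < γ₂ ≤ 1`, `A, D` are invertible `n × n` matrices with `‖A⁻¹‖ ≤ 1/(θγ₁)`,
`‖B‖ + ‖C‖ ≤ 1/(θγ₂)`, `‖D⁻¹‖ ≤ 1/(θγ₃)`, and `γ₁γ₂² ≥ γ̄(n)/θ⁴`, the block matrix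
`(A B; C D)` is invertible and the blocks of `(A B; C D)⁻¹ − (A⁻¹ 0; 0 D⁻¹)` obey
the stated operator norm bounds. -/
theorem block_matrix_inverse_estimate (n : ℕ) (hn : 1 ≤ n) :
    ∃ γbar Cn : ℝ, 1 < γbar ∧ 1 < Cn ∧
    ∀ (θ γ₁ γ₂ γ₃ : ℝ), 0 < θ → θ < 1 → 1 < γ₁ → 0 < γ₂ → γ₂ ≤ 1 → 1 < γ₃ →
    ∀ A B C D : Matrix (Fin n) (Fin n) ℝ, IsUnit A → IsUnit D →
      matOpNorm A⁻¹ ≤ 1 / (θ * γ₁) →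
      matOpNorm B + matOpNorm C ≤ 1 / (θ * γ₂) →
      matOpNorm D⁻¹ ≤ 1 / (θ * γ₃) →
      γbar / θ ^ 4 ≤ γ₁ * γ₂ ^ 2 →
      IsUnit (Matrix.fromBlocks A B C D) ∧
      matOpNorm (((Matrix.fromBlocks A B C D)⁻¹
          - Matrix.fromBlocks A⁻¹ 0 0 D⁻¹).toBlocks₁₁)
        ≤ Cn / (θ ^ 5 * γ₁ ^ 2 * γ₂ ^ 2) ∧
      matOpNorm (((Matrix.fromBlocks A B C D)⁻¹
          - Matrix.fromBlocks A⁻¹ 0 0 D⁻¹).toBlocks₁₂)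
        ≤ Cn / (θ ^ 3 * γ₁ * γ₂) ∧
      matOpNorm (((Matrix.fromBlocks A B C D)⁻¹
          - Matrix.fromBlocks A⁻¹ 0 0 D⁻¹).toBlocks₂₁)
        ≤ Cn / (θ ^ 3 * γ₁ * γ₂) ∧
      matOpNorm (((Matrix.fromBlocks A B C D)⁻¹
          - Matrix.fromBlocks A⁻¹ 0 0 D⁻¹).toBlocks₂₂)
        ≤ Cn / (θ ^ 5 * γ₁ * γ₂ ^ 2 * γ₃ ^ 2) := by
  refine ⟨2, 2, one_lt_two, one_lt_two, ?_⟩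
  intro θ γ₁ γ₂ γ₃ hθ hθ1 hγ₁ hγ₂ hγ₂1 hγ₃ A B C D hA hD hAn hBC hDn hγ
  have hAdet : IsUnit A.det := (Matrix.isUnit_iff_isUnit_det A).mp hA
  have hDdet : IsUnit D.det := (Matrix.isUnit_iff_isUnit_det D).mp hD
  have hAA : A * A⁻¹ = 1 := Matrix.mul_nonsing_inv _ hAdet
  have hDD : D * D⁻¹ = 1 := Matrix.mul_nonsing_inv _ hDdet
  set a := matOpNorm A⁻¹ with hadef
  set b := matOpNorm B with hbdef
  set c := matOpNorm C with hcdef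
  set d := matOpNorm D⁻¹ with hddef
  have ha0 : 0 ≤ a := matOpNorm_nonneg _
  have hb0 : 0 ≤ b := matOpNorm_nonneg _
  have hc0 : 0 ≤ c := matOpNorm_nonneg _
  have hd0 : 0 ≤ d := matOpNorm_nonneg _
  -- Schur complement
  set S : Matrix (Fin n) (Fin n) ℝ := D - C * A⁻¹ * B with hSdef
  set T : Matrix (Fin n) (Fin n) ℝ := D⁻¹ * (C * A⁻¹ * B) with hTdef
  have hTn : matOpNorm T ≤ d * ((c*a)*b) := by
    refine (matOpNorm_mul_le _ _).trans ?_
    refine mul_le_mul_of_nonneg_left ?_ hd0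
    refine (matOpNorm_mul_le _ _).trans ?_
    exact mul_le_mul_of_nonneg_right (matOpNorm_mul_le _ _) hb0
  have hT8 : matOpNorm T ≤ 1/8 :=
    hTn.trans (arith_T hθ hγ₁ hγ₂ hγ₃ ha0 hb0 hc0 hd0 hAn hBC hDn hγ)
  obtain ⟨h1T, h1Tinv⟩ := matrix_one_sub (T := T) (by linarith)
  have h1Tinv2 : matOpNorm (1 - T)⁻¹ ≤ 2 := by
    have h78 : (7:ℝ)/8 ≤ 1 - matOpNorm T := by linarith
    have : (1 - matOpNorm T)⁻¹ ≤ (7/8 : ℝ)⁻¹ := by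
      apply inv_anti₀ (by norm_num) h78
    refine h1Tinv.trans (this.trans (by norm_num))
  have hS : D * (1 - T) = S := by
    rw [mul_sub, mul_one, hTdef, ← mul_assoc, hDD, one_mul]
  have hSu : IsUnit S := by rw [← hS]; exact hD.mul h1T
  have hSdet : IsUnit S.det := (Matrix.isUnit_iff_isUnit_det S).mp hSu
  have hSS : S * S⁻¹ = 1 := Matrix.mul_nonsing_inv _ hSdet
  have hS'S : S⁻¹ * S = 1 := Matrix.nonsing_inv_mul _ hSdet
  have hSinv : S⁻¹ = (1 - T)⁻¹ * D⁻¹ := by rw [← hS, Matrix.mul_inv_rev]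
  set s := matOpNorm S⁻¹ with hsdef
  have hs0 : 0 ≤ s := matOpNorm_nonneg _
  have hs : s ≤ 2 * d := by
    rw [hsdef, hSinv]
    exact (matOpNorm_mul_le _ _).trans (mul_le_mul_aux (matOpNorm_nonneg _) h1Tinv2 hd0 le_rfl)
  -- explicit inverse
  set N11 : Matrix (Fin n) (Fin n) ℝ := A⁻¹ + A⁻¹ * (B * (S⁻¹ * (C * A⁻¹)))
  set N12 : Matrix (Fin n) (Fin n) ℝ := -(A⁻¹ * (B * S⁻¹))
  set N21 : Matrix (Fin n) (Fin n) ℝ := -(S⁻¹ * (C * A⁻¹))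
  have hCAB : C * A⁻¹ * B = D - S := by rw [hSdef, sub_sub_cancel]
  have h11 : A * N11 + B * N21 = 1 := by
    simp only [N11, N21, mul_add, mul_neg, ← mul_assoc, hAA, one_mul]
    abel
  have h12 : A * N12 + B * S⁻¹ = 0 := by
    simp only [N12, mul_neg, ← mul_assoc, hAA, one_mul]
    abel
  have h21 : C * N11 + D * N21 = 0 := by
    simp only [N11, N21, mul_add, mul_neg, ← mul_assoc]
    rw [hCAB]
    simp only [sub_mul, hSS, one_mul]
    abel
  have h22 : C * N12 + D * S⁻¹ = 1 := by
    simp only [N12, mul_neg, ← mul_assoc]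
    rw [hCAB]
    simp only [sub_mul, hSS, one_mul]
    abel
  have hMN : Matrix.fromBlocks A B C D * Matrix.fromBlocks N11 N12 N21 S⁻¹ = 1 := by
    rw [Matrix.fromBlocks_multiply, h11, h12, h21, h22, Matrix.fromBlocks_one]
  have hMdet : IsUnit (Matrix.fromBlocks A B C D).det := by
    have := congrArg Matrix.det hMN
    rw [Matrix.det_mul, Matrix.det_one] at this
    exact IsUnit.of_mul_eq_one _ this
  have hMu : IsUnit (Matrix.fromBlocks A B C D) :=
    (Matrix.isUnit_iff_isUnit_det _).mpr hMdet
  have hMinv : (Matrix.fromBlocks A B C D)⁻¹ = Matrix.fromBlocks N11 N12 N21 S⁻¹ :=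
    Matrix.inv_eq_right_inv hMN
  -- block norm bounds
  obtain ⟨e11, e12, e21, e22⟩ :=
    arith_main hθ hγ₁ hγ₂ hγ₃ ha0 hb0 hc0 hd0 hs0 hAn hBC hDn hs
  have n11 : matOpNorm (A⁻¹ * (B * (S⁻¹ * (C * A⁻¹)))) ≤ a * (b * (s * (c*a))) := by
    refine (matOpNorm_mul_le _ _).trans (mul_le_mul_of_nonneg_left ?_ ha0)
    refine (matOpNorm_mul_le _ _).trans (mul_le_mul_of_nonneg_left ?_ hb0)
    refine (matOpNorm_mul_le _ _).trans (mul_le_mul_of_nonneg_left ?_ hs0)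
    exact matOpNorm_mul_le _ _
  have n12 : matOpNorm (A⁻¹ * (B * S⁻¹)) ≤ a * (b * s) := by
    refine (matOpNorm_mul_le _ _).trans (mul_le_mul_of_nonneg_left ?_ ha0)
    exact matOpNorm_mul_le _ _
  have n21 : matOpNorm (S⁻¹ * (C * A⁻¹)) ≤ s * (c*a) := by
    refine (matOpNorm_mul_le _ _).trans (mul_le_mul_of_nonneg_left ?_ hs0)
    exact matOpNorm_mul_le _ _
  have hE22eq : S⁻¹ - D⁻¹ = S⁻¹ * ((C * A⁻¹ * B) * D⁻¹) := by
    rw [hCAB, sub_mul, hDD, mul_sub, mul_one, ← mul_assoc, hS'S, one_mul]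
  have n22 : matOpNorm (S⁻¹ - D⁻¹) ≤ s * (((c*a)*b)*d) := by
    rw [hE22eq]
    refine (matOpNorm_mul_le _ _).trans (mul_le_mul_of_nonneg_left ?_ hs0)
    refine (matOpNorm_mul_le _ _).trans (mul_le_mul_of_nonneg_right ?_ hd0)
    exact (matOpNorm_mul_le _ _).trans (mul_le_mul_of_nonneg_right (matOpNorm_mul_le _ _) hb0)
  refine ⟨hMu, ?_, ?_, ?_, ?_⟩
  · rw [hMinv, toBlocks₁₁_sub]
    simp only [Matrix.toBlocks_fromBlocks₁₁]
    rw [show N11 - A⁻¹ = A⁻¹ * (B * (S⁻¹ * (C * A⁻¹))) from add_sub_cancel_left _ _]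
    exact n11.trans e11
  · rw [hMinv, toBlocks₁₂_sub]
    simp only [Matrix.toBlocks_fromBlocks₁₂]
    rw [sub_zero, show N12 = -(A⁻¹ * (B * S⁻¹)) from rfl, matOpNorm_neg]
    exact n12.trans e12
  · rw [hMinv, toBlocks₂₁_sub]
    simp only [Matrix.toBlocks_fromBlocks₂₁]
    rw [sub_zero, show N21 = -(S⁻¹ * (C * A⁻¹)) from rfl, matOpNorm_neg]
    exact n21.trans e21
  · rw [hMinv, toBlocks₂₂_sub]
    simp only [Matrix.toBlocks_fromBlocks₂₂]
    exact n22.trans e22
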